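/- Let γ be the standard Gaussian measure on ℝ and let H_n be the probabilists' Hermite polynomials. Then ∫ sign(x) dγ(x) = 0, and for every integer i ≥ 1, ∫ sign(x)·H_i(x) dγ(x) = √(2/π)·H_{i−1}(0). -/

import Mathlib

open MeasureTheory ProbabilityTheory Real

/-- `sign(a) = 1` if `a ≥ 0` and `-1` otherwise. -/
noncomputable def sgn (a : ℝ) : ℝ := if 0 ≤ a then 1 else -1

/-- The probabilists' Hermite polynomials, evaluated at a real number. -/
noncomputable def H (n : ℕ) (x : ℝ) : ℝ := Polynomial.aeval x (Polynomial.hermite n)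

open Polynomial Filter Set Topology NNReal ENNReal

noncomputable def Q (n : ℕ) : ℝ[X] := (hermite n).map (Int.castRingHom ℝ)

lemma Q_succ (n : ℕ) : Q (n+1) = X * Q n - derivative (Q n) := by
  simp [Q, hermite_succ, Polynomial.derivative_map]

lemma Q_eval (n : ℕ) (x : ℝ) : (Q n).eval x = Polynomial.aeval x (hermite n) := by
  simp [Q, Polynomial.eval_map, Polynomial.aeval_def]

lemma integrable_poly_gauss (p : ℝ[X]) :
    Integrable (fun x : ℝ => p.eval x * rexp (-(x^2/2))) := by
  induction p using Polynomial.induction_on' with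
  | add p q hp hq => simpa [add_mul, Pi.add_def] using hp.add hq
  | monomial n c =>
    have h := ((integrable_rpow_mul_exp_neg_mul_sq (b := (1:ℝ)/2) (by norm_num)
        (s := (n:ℝ)) (lt_of_lt_of_le neg_one_lt_zero (Nat.cast_nonneg n))).const_mul c)
    refine h.congr (Eventually.of_forall fun x => ?_)
    dsimp only
    rw [eval_monomial, Real.rpow_natCast, show -(x^2/2) = -((1:ℝ)/2)*x^2 from by ring]
    ring

lemma tendsto_poly_gauss (p : ℝ[X]) :
    Tendsto (fun x : ℝ => p.eval x * rexp (-(x^2/2))) (cocompact ℝ) (𝓝 0) := by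
  induction p using Polynomial.induction_on' with
  | add p q hp hq => simpa [add_mul] using hp.add hq
  | monomial n c =>
    have h := (tendsto_rpow_abs_mul_exp_neg_mul_sq_cocompact (a := (1:ℝ)/2) (by norm_num)
        (n:ℝ)).const_mul |c|
    rw [mul_zero] at h
    refine squeeze_zero_norm (fun x => ?_) h
    rw [eval_monomial, show -(x^2/2) = -((1:ℝ)/2)*x^2 from by ring, Real.rpow_natCast]
    rw [norm_mul, norm_mul]
    simp [abs_of_nonneg (Real.exp_nonneg _), abs_pow, mul_assoc, Real.norm_eq_abs]

lemma hasDerivAt_gauss (n : ℕ) (x : ℝ) :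
    HasDerivAt (fun y : ℝ => -((Q n).eval y) * rexp (-(y^2/2)))
      ((Q (n+1)).eval x * rexp (-(x^2/2))) x := by
  have h1 : HasDerivAt (fun y : ℝ => (Q n).eval y)
      ((derivative (Q n)).eval x) x := (Q n).hasDerivAt x
  have h2 : HasDerivAt (fun y : ℝ => rexp (-(y^2/2))) (-x * rexp (-(x^2/2))) x := by
    have h3 : HasDerivAt (fun y : ℝ => -(y^2/2)) (-x) x := by
      have := ((hasDerivAt_pow 2 x).div_const 2).neg
      exact this.congr_deriv (by simp)
    simpa [mul_comm] using h3.exp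
  have := h1.neg.mul h2
  refine this.congr_deriv ?_
  rw [Q_succ]
  simp only [eval_sub, eval_mul, eval_X, Pi.neg_apply]
  ring

lemma tendsto_neg_gauss (n : ℕ) (l : Filter ℝ) (hl : l ≤ cocompact ℝ) :
    Tendsto (fun y : ℝ => -((Q n).eval y) * rexp (-(y^2/2))) l (𝓝 0) := by
  have := (tendsto_poly_gauss (Q n)).neg
  rw [neg_zero] at this
  exact ((this.mono_left hl).congr (fun x => (neg_mul _ _).symm))

lemma integral_Ioi_gauss (n : ℕ) :
    ∫ x in Ioi (0:ℝ), (Q (n+1)).eval x * rexp (-(x^2/2)) = (Q n).eval 0 := by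
  rw [integral_Ioi_of_hasDerivAt_of_tendsto' (fun x _ => hasDerivAt_gauss n x)
    ((integrable_poly_gauss (Q (n+1))).integrableOn)
    (tendsto_neg_gauss n _ _root_.atTop_le_cocompact)]
  simp

lemma integral_Iic_gauss (n : ℕ) :
    ∫ x in Iic (0:ℝ), (Q (n+1)).eval x * rexp (-(x^2/2)) = -(Q n).eval 0 := by
  rw [integral_Iic_of_hasDerivAt_of_tendsto' (fun x _ => hasDerivAt_gauss n x)
    ((integrable_poly_gauss (Q (n+1))).integrableOn)
    (tendsto_neg_gauss n _ _root_.atBot_le_cocompact)]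
  simp

lemma integral_gaussianReal_std (f : ℝ → ℝ) :
    ∫ x, f x ∂(gaussianReal 0 1) = (Real.sqrt (2*π))⁻¹ * ∫ x, f x * rexp (-(x^2/2)) := by
  rw [gaussianReal_of_var_ne_zero 0 one_ne_zero]
  have h : (gaussianPDF 0 1)
      = fun x => ((Real.toNNReal (gaussianPDFReal 0 1 x) : ℝ≥0) : ℝ≥0∞) := rfl
  rw [h, integral_withDensity_eq_integral_smul
    ((measurable_gaussianPDFReal 0 1).real_toNNReal) f, ← integral_const_mul]
  congr 1; funext x
  rw [NNReal.smul_def, Real.coe_toNNReal _ (gaussianPDFReal_nonneg 0 1 x)]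
  rw [gaussianPDFReal]
  push_cast
  rw [show -(x - 0)^2/(2*1) = -(x^2/2) from by ring]
  rw [smul_eq_mul]; ring

lemma measurable_sgn : Measurable sgn := by
  unfold sgn
  exact Measurable.ite measurableSet_Ici measurable_const measurable_const

lemma abs_sgn_le (x : ℝ) : ‖sgn x‖ ≤ 1 := by
  rw [sgn]; split <;> simp

lemma ae_ne_zero : ∀ᵐ (x : ℝ), x ≠ 0 := by
  rw [ae_iff]
  simpa using measure_singleton (0:ℝ)

lemma split_integral (g : ℝ → ℝ) (hg : Integrable g) :
    ∫ x : ℝ, sgn x * g x = (∫ x in Ioi (0:ℝ), g x) - ∫ x in Iic (0:ℝ), g x := by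
  have hint : Integrable (fun x : ℝ => sgn x * g x) :=
    hg.bdd_mul measurable_sgn.aestronglyMeasurable (c := 1) (Eventually.of_forall abs_sgn_le)
  rw [← intervalIntegral.integral_Iic_add_Ioi (b := 0) hint.integrableOn hint.integrableOn]
  have h1 : ∫ x in Iic (0:ℝ), sgn x * g x = ∫ x in Iic (0:ℝ), -(g x) := by
    refine setIntegral_congr_ae measurableSet_Iic ?_
    filter_upwards [ae_ne_zero] with x hx hxI
    rw [sgn, if_neg (fun h => hx (le_antisymm hxI h))]
    ring
  have h2 : ∫ x in Ioi (0:ℝ), sgn x * g x = ∫ x in Ioi (0:ℝ), g x := by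
    refine setIntegral_congr_fun measurableSet_Ioi (fun x hx => ?_)
    rw [sgn, if_pos (le_of_lt hx), one_mul]
  rw [h1, h2, integral_neg]
  ring

lemma sqrt_const_eq : Real.sqrt (2/π) = 2 * (Real.sqrt (2*π))⁻¹ := by
  rw [show (2:ℝ)/π = 4/(2*π) from by ring,
    Real.sqrt_div (by norm_num) (2*π),
    show (4:ℝ) = 2^2 from by norm_num,
    Real.sqrt_sq (by norm_num : (0:ℝ) ≤ 2), div_eq_mul_inv]

lemma integrable_gauss : Integrable (fun x : ℝ => rexp (-(x^2/2))) := by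
  simpa using integrable_poly_gauss (C 1)

lemma sym_gauss : ∫ x in Iic (0:ℝ), rexp (-(x^2/2)) = ∫ x in Ioi (0:ℝ), rexp (-(x^2/2)) := by
  have := _root_.integral_comp_neg_Ioi (0:ℝ) (fun x => rexp (-(x^2/2)))
  simp only [neg_zero, neg_sq] at this
  exact this.symm

/-- Hermite coefficients of the sign function with respect to the standard Gaussian:
`∫ sign dγ = 0` and for `i ≥ 1`, `∫ sign·H_i dγ = √(2/π)·H_{i-1}(0)`. -/
theorem stmt2 :
    (∫ x : ℝ, sgn x ∂(gaussianReal 0 1)) = 0 ∧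
    ∀ i : ℕ, 1 ≤ i →
      (∫ x : ℝ, sgn x * H i x ∂(gaussianReal 0 1))
        = Real.sqrt (2 / Real.pi) * H (i - 1) 0 := by
  constructor
  · rw [integral_gaussianReal_std sgn, split_integral _ integrable_gauss, sym_gauss]
    simp
  · intro i hi
    obtain ⟨k, rfl⟩ : ∃ k, i = k + 1 := ⟨i - 1, (Nat.succ_pred_eq_of_pos hi).symm⟩
    rw [integral_gaussianReal_std (fun x => sgn x * H (k+1) x)]
    have h1 : ∫ x : ℝ, sgn x * H (k+1) x * rexp (-(x^2/2))
        = ∫ x : ℝ, sgn x * ((Q (k+1)).eval x * rexp (-(x^2/2))) := by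
      congr 1; funext x; rw [Q_eval]; unfold H; ring
    rw [h1, split_integral _ (integrable_poly_gauss (Q (k+1))),
      integral_Ioi_gauss, integral_Iic_gauss]
    have h2 : H (k + 1 - 1) 0 = (Q k).eval 0 := by
      simp [H, Q_eval]
    rw [h2, sqrt_const_eq]
    ring
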